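/- There exists a Borel probability measure ν on the unit sphere Sⁿ ⊂ ℝ^{n+1} such that T_α(ν,σ) = +∞ while H(ν|σ) < +∞, where σ is the uniform probability measure on Sⁿ and α(u,v) = log(1/(u·v)) if u·v > 0 and α(u,v) = +∞ otherwise. -/

import Mathlib

open MeasureTheory Set Filter
open scoped RealInnerProductSpace ENNReal Topology

/-- The set of couplings of two measures: measures on the product whose marginals are the
given measures. -/
def Coupling {α : Type*} [MeasurableSpace α] (ν₁ ν₂ : Measure α) :
    Set (Measure (α × α)) :=
  {π | π.map Prod.fst = ν₁ ∧ π.map Prod.snd = ν₂}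

/-- The optimal transport cost `T_c(ν₁,ν₂) = inf { ∫ c dπ : π coupling of ν₁ and ν₂}`. -/
noncomputable def transportCost {α : Type*} [MeasurableSpace α]
    (c : α → α → ℝ≥0∞) (ν₁ ν₂ : Measure α) : ℝ≥0∞ :=
  ⨅ π ∈ Coupling ν₁ ν₂, ∫⁻ p, c p.1 p.2 ∂π

open Classical in
/-- Relative entropy `H(ν|μ) = ∫ log (dν/dμ) dν` if `ν ≪ μ` (and the integral exists),
`+∞` otherwise.  For probability measures the negative part of the integrand is always
integrable, so the `+∞` convention for the non-integrable case is the correct one. -/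
noncomputable def relEnt {α : Type*} [MeasurableSpace α] (ν μ : Measure α) : ℝ≥0∞ :=
  if ν ≪ μ ∧ Integrable (llr ν μ) ν then ENNReal.ofReal (∫ x, llr ν μ x ∂ν) else ⊤


/-- The Oliker-Bertrand-Kolesnikov cost on the sphere:
`α(u,v) = log(1/(u·v))` if `u·v > 0` and `+∞` otherwise. -/
noncomputable def sphereCost {n : ℕ}
    (u v : EuclideanSpace ℝ (Fin (n + 1))) : ℝ≥0∞ :=
  if 0 < ⟪u, v⟫ then ENNReal.ofReal (Real.log (1 / ⟪u, v⟫)) else ⊤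

lemma aux_inner_neg {E : Type*} [NormedAddCommGroup E] [InnerProductSpace ℝ E]
    (u v e : E) (hu : ‖u‖ = 1) (hv : ‖v‖ = 1) (he : ‖e‖ = 1)
    (ha : 4/5 ≤ ⟪u, e⟫) (hb : ⟪v, e⟫ ≤ -(4/5)) : ⟪u, v⟫ ≤ 0 := by
  set a := ⟪u, e⟫ with h1
  set b := ⟪v, e⟫ with h2
  have hee : ⟪e, e⟫ = 1 := by
    rw [real_inner_self_eq_norm_sq, he]; norm_num
  have heu : ⟪e, u⟫ = a := by rw [real_inner_comm]
  have hev : ⟪e, v⟫ = b := by rw [real_inner_comm]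
  have key : ⟪u - a • e, v - b • e⟫ = ⟪u, v⟫ - a * b := by
    simp only [inner_sub_left, inner_sub_right, real_inner_smul_left, real_inner_smul_right, hee,
      hev, ← h1, ← h2]
    ring
  have hu' : ‖u - a • e‖ ^ 2 = 1 - a ^ 2 := by
    rw [← real_inner_self_eq_norm_sq]
    simp only [inner_sub_left, inner_sub_right, real_inner_smul_left, real_inner_smul_right, hee,
      heu, ← h1]
    rw [real_inner_self_eq_norm_sq, hu]; ring
  have hv' : ‖v - b • e‖ ^ 2 = 1 - b ^ 2 := by
    rw [← real_inner_self_eq_norm_sq]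
    simp only [inner_sub_left, inner_sub_right, real_inner_smul_left, real_inner_smul_right, hee,
      hev, ← h2]
    rw [real_inner_self_eq_norm_sq, hv]; ring
  have h3 : ⟪u - a • e, v - b • e⟫ ≤ ‖u - a • e‖ * ‖v - b • e‖ := real_inner_le_norm _ _
  have hun : ‖u - a • e‖ ≤ 3/5 := by nlinarith [norm_nonneg (u - a • e)]
  have hvn : ‖v - b • e‖ ≤ 3/5 := by nlinarith [norm_nonneg (v - b • e)]
  nlinarith [norm_nonneg (u - a • e), norm_nonneg (v - b • e)]

section caps
variable {n : ℕ}
local notation "E" => EuclideanSpace ℝ (Fin (n + 1))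

lemma cap_meas (x : E) : MeasurableSet {u : E | 4/5 ≤ ⟪u, x⟫} := by
  have : Continuous fun u : E => ⟪u, x⟫ := Continuous.inner continuous_id continuous_const
  exact (isClosed_le continuous_const this).measurableSet

lemma cap_eq (σ : Measure E)
    (hσinv : ∀ T : E ≃ₗᵢ[ℝ] E, σ.map T = σ)
    (x y : E) (hx : ‖x‖ = 1) (hy : ‖y‖ = 1) :
    σ {u : E | 4/5 ≤ ⟪u, x⟫} = σ {u : E | 4/5 ≤ ⟪u, y⟫} := by
  have h := hy.trans hx.symm
  set T : E ≃ₗᵢ[ℝ] E := Submodule.reflection (ℝ ∙ (y - x))ᗮ with hT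
  have hTy : T y = x := Submodule.reflection_sub h
  calc σ {u : E | 4/5 ≤ ⟪u, x⟫} = (σ.map T) {u : E | 4/5 ≤ ⟪u, x⟫} := by rw [hσinv T]
    _ = σ (T ⁻¹' {u : E | 4/5 ≤ ⟪u, x⟫}) :=
        Measure.map_apply T.continuous.measurable (cap_meas x)
    _ = σ {u : E | 4/5 ≤ ⟪u, y⟫} := by
        congr 1
        ext u
        simp only [mem_preimage, mem_setOf_eq]
        rw [← hTy, LinearIsometryEquiv.inner_map_map]

lemma cap_pos (σ : Measure E) [IsProbabilityMeasure σ]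
    (hσsphere : σ (Metric.sphere (0 : E) 1)ᶜ = 0)
    (hσinv : ∀ T : E ≃ₗᵢ[ℝ] E, σ.map T = σ)
    (y : E) (hy : ‖y‖ = 1) : 0 < σ {u : E | 4/5 ≤ ⟪u, y⟫} := by
  set S : Set E := Metric.sphere (0 : E) 1 with hS
  have hσS : σ S ≠ 0 := by
    intro h0
    have : (1 : ℝ≥0∞) ≤ 0 := by
      calc (1:ℝ≥0∞) = σ univ := (measure_univ).symm
        _ ≤ σ S + σ Sᶜ := by rw [← union_compl_self S] at *; exact measure_union_le _ _
        _ = 0 := by rw [h0, hσsphere, add_zero]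
    simp at this
  have hcov : S ⊆ ⋃ x ∈ S, {u : E | 4/5 < ⟪u, x⟫} := by
    intro u hu
    have hu1 : ‖u‖ = 1 := by simpa using mem_sphere_zero_iff_norm.mp hu
    refine mem_biUnion hu ?_
    have : ⟪u, u⟫ = 1 := by rw [real_inner_self_eq_norm_sq, hu1]; norm_num
    simp only [mem_setOf_eq, this]; norm_num
  have hopen : ∀ x ∈ S, IsOpen {u : E | 4/5 < ⟪u, x⟫} := by
    intro x _
    have : Continuous fun u : E => ⟪u, x⟫ := Continuous.inner continuous_id continuous_const
    exact isOpen_lt continuous_const this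
  obtain ⟨b, hbS, hbfin, hbcov⟩ :=
    (isCompact_sphere (0 : E) 1).elim_finite_subcover_image hopen hcov
  rcases eq_or_ne (σ {u : E | 4/5 ≤ ⟪u, y⟫}) 0 with h0 | h0
  · exfalso
    apply hσS
    have hle : σ S ≤ ∑ x ∈ hbfin.toFinset, σ {u : E | 4/5 ≤ ⟪u, x⟫} := by
      calc σ S ≤ σ (⋃ x ∈ hbfin.toFinset, {u : E | 4/5 < ⟪u, x⟫}) := by
            apply measure_mono
            refine hbcov.trans ?_
            simp only [hbfin.mem_toFinset]
            exact subset_rfl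
        _ ≤ ∑ x ∈ hbfin.toFinset, σ {u : E | 4/5 < ⟪u, x⟫} := measure_biUnion_finset_le _ _
        _ ≤ ∑ x ∈ hbfin.toFinset, σ {u : E | 4/5 ≤ ⟪u, x⟫} := by
            apply Finset.sum_le_sum
            intro x _
            refine measure_mono (fun u hu => ?_)
            exact le_of_lt (mem_setOf_eq ▸ hu)
    have hzero : ∀ x ∈ hbfin.toFinset, σ {u : E | 4/5 ≤ ⟪u, x⟫} = 0 := by
      intro x hx
      have hx1 : ‖x‖ = 1 := by
        have := hbS (hbfin.mem_toFinset.mp hx)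
        simpa using mem_sphere_zero_iff_norm.mp this
      rw [cap_eq σ hσinv x y hx1 hy, h0]
    rw [Finset.sum_eq_zero hzero] at hle
    exact le_antisymm hle (zero_le)
  · exact pos_iff_ne_zero.mpr h0
end caps


section mainaux
variable {n : ℕ}
local notation "E" => EuclideanSpace ℝ (Fin (n + 1))

theorem main_aux (σ : Measure E) [IsProbabilityMeasure σ]
    (hσsphere : σ (Metric.sphere (0 : E) 1)ᶜ = 0)
    (hσinv : ∀ T : E ≃ₗᵢ[ℝ] E, σ.map T = σ) :
    ∃ ν : Measure E,
      IsProbabilityMeasure ν ∧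
      ν (Metric.sphere (0 : E) 1)ᶜ = 0 ∧
      (∀ π : Measure (E × E), π.map Prod.fst = ν → π.map Prod.snd = σ →
        ∫⁻ p, sphereCost p.1 p.2 ∂π = ⊤) ∧
      ν ≪ σ ∧ Integrable (llr ν σ) ν := by
  classical
  set S : Set E := Metric.sphere (0 : E) 1 with hSdef
  set e : E := EuclideanSpace.single (0 : Fin (n+1)) (1:ℝ) with hedef
  have he : ‖e‖ = 1 := by rw [hedef, EuclideanSpace.norm_single]; norm_num
  have hne : ‖-e‖ = 1 := by rw [norm_neg]; exact he
  have hSmeas : MeasurableSet S := Metric.isClosed_sphere.measurableSet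
  set C : Set E := S ∩ {u : E | 4/5 ≤ ⟪u, e⟫} with hCdef
  set D : Set E := S ∩ {u : E | 4/5 ≤ ⟪u, -e⟫} with hDdef
  have hCmeas : MeasurableSet C := hSmeas.inter (cap_meas e)
  have hDmeas : MeasurableSet D := hSmeas.inter (cap_meas (-e))
  -- positivity of σ C and σ D
  have hcapC : 0 < σ {u : E | 4/5 ≤ ⟪u, e⟫} := cap_pos σ hσsphere hσinv e he
  have hcapD : 0 < σ {u : E | 4/5 ≤ ⟪u, -e⟫} := cap_pos σ hσsphere hσinv (-e) hne
  have hsub : ∀ x : E, {u : E | 4/5 ≤ ⟪u, x⟫} ⊆ (S ∩ {u : E | 4/5 ≤ ⟪u, x⟫}) ∪ Sᶜ := by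
    intro x u hu
    by_cases h : u ∈ S
    · exact Or.inl ⟨h, hu⟩
    · exact Or.inr h
  have hCpos : 0 < σ C := by
    rcases eq_or_ne (σ C) 0 with h0 | h0
    · exfalso
      have := (measure_mono (μ := σ) (hsub e)).trans (measure_union_le _ _)
      rw [← hCdef, h0, hσsphere, add_zero] at this
      exact absurd (le_antisymm this (zero_le)) hcapC.ne'
    · exact pos_iff_ne_zero.mpr h0
  have hDpos : 0 < σ D := by
    rcases eq_or_ne (σ D) 0 with h0 | h0
    · exfalso
      have := (measure_mono (μ := σ) (hsub (-e))).trans (measure_union_le _ _)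
      rw [← hDdef, h0, hσsphere, add_zero] at this
      exact absurd (le_antisymm this (zero_le)) hcapD.ne'
    · exact pos_iff_ne_zero.mpr h0
  have hCtop : σ C ≠ ⊤ := measure_ne_top σ C
  -- the measure ν
  set f : E → ℝ≥0∞ := C.indicator (fun _ => (σ C)⁻¹) with hfdef
  have hfmeas : Measurable f := measurable_const.indicator hCmeas
  set ν : Measure E := σ.withDensity f with hνdef
  have hνC : ν Cᶜ = 0 := by
    rw [hνdef, withDensity_apply _ hCmeas.compl]
    rw [setLIntegral_congr_fun hCmeas.compl
      (fun x hx => indicator_of_notMem hx _)]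
    simp
  have hνuniv : ν univ = 1 := by
    rw [hνdef, withDensity_apply _ MeasurableSet.univ, Measure.restrict_univ, hfdef,
      lintegral_indicator hCmeas, setLIntegral_const, ENNReal.inv_mul_cancel hCpos.ne' hCtop]
  have hνprob : IsProbabilityMeasure ν := ⟨hνuniv⟩
  have hνSc : ν Sᶜ = 0 := by
    have : Sᶜ ⊆ Cᶜ := compl_subset_compl.mpr inter_subset_left
    exact le_antisymm ((measure_mono this).trans hνC.le) (zero_le)
  refine ⟨ν, hνprob, hνSc, ?_, ?_, ?_⟩
  · -- transport cost infinite for every coupling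
    intro π hfst hsnd
    have h1 : π (Prod.fst ⁻¹' Cᶜ) = 0 := by
      rw [← Measure.map_apply measurable_fst hCmeas.compl, hfst]; exact hνC
    have h2 : π (Prod.snd ⁻¹' D) = σ D := by
      rw [← Measure.map_apply measurable_snd hDmeas, hsnd]
    have hsub2 : Prod.snd ⁻¹' D ⊆ (C ×ˢ D) ∪ (Prod.fst ⁻¹' Cᶜ) := by
      intro p hp
      by_cases h : p.1 ∈ C
      · exact Or.inl ⟨h, hp⟩
      · exact Or.inr h
    have hπCD : π (C ×ˢ D) ≠ 0 := by
      intro h0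
      have := (measure_mono (μ := π) hsub2).trans (measure_union_le _ _)
      rw [h2, h0, h1, add_zero] at this
      exact absurd (le_antisymm this (zero_le)) hDpos.ne'
    have hcost : ∀ p : E × E, p ∈ C ×ˢ D → sphereCost p.1 p.2 = ⊤ := by
      rintro ⟨u, v⟩ ⟨⟨huS, hue⟩, ⟨hvS, hve⟩⟩
      have hu1 : ‖u‖ = 1 := by simpa using mem_sphere_zero_iff_norm.mp huS
      have hv1 : ‖v‖ = 1 := by simpa using mem_sphere_zero_iff_norm.mp hvS
      have hb : ⟪v, e⟫ ≤ -(4/5) := by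
        have := hve
        simp only [mem_setOf_eq, inner_neg_right] at this
        linarith
      have : ⟪u, v⟫ ≤ 0 := aux_inner_neg u v e hu1 hv1 he hue hb
      simp only [sphereCost, if_neg (not_lt.mpr this)]
    refine top_le_iff.mp ?_
    calc (⊤ : ℝ≥0∞) = ⊤ * π (C ×ˢ D) := (ENNReal.top_mul hπCD).symm
      _ = ∫⁻ p in C ×ˢ D, ⊤ ∂π := (setLIntegral_const _ _).symm
      _ = ∫⁻ p in C ×ˢ D, sphereCost p.1 p.2 ∂π := by
          refine (setLIntegral_congr_fun (hCmeas.prod hDmeas)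
            (fun p hp => ?_)).symm
          exact hcost p hp
      _ ≤ ∫⁻ p, sphereCost p.1 p.2 ∂π := setLIntegral_le_lintegral _ _
  · exact withDensity_absolutelyContinuous σ f
  · -- integrability of llr
    have hac : ν ≪ σ := withDensity_absolutelyContinuous σ f
    have hrn : ν.rnDeriv σ =ᵐ[σ] f := Measure.rnDeriv_withDensity σ hfmeas
    have hrnν : ν.rnDeriv σ =ᵐ[ν] f := hrn.filter_mono hac.ae_le
    have hmemC : ∀ᵐ x ∂ν, x ∈ C := by
      rw [ae_iff]
      convert hνC using 2
      rfl
    have hllr : llr ν σ =ᵐ[ν] fun _ => Real.log ((σ C)⁻¹).toReal := by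
      filter_upwards [hrnν, hmemC] with x h1 h2
      rw [llr_def]
      simp only [h1, hfdef, indicator_of_mem h2]
    exact (integrable_const _).congr hllr.symm
end mainaux

/-- There exists a probability measure `ν` on the unit sphere `Sⁿ ⊂ ℝ^{n+1}` (encoded as a
measure on `ℝ^{n+1}` concentrated on the unit sphere) with `T_α(ν,σ) = +∞` and
`H(ν|σ) < +∞`, where `σ` is the uniform (rotation-invariant) probability measure on `Sⁿ`. -/
theorem exists_infinite_transport_finite_entropy (n : ℕ)
    (σ : Measure (EuclideanSpace ℝ (Fin (n + 1)))) [IsProbabilityMeasure σ]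
    (hσsphere : σ (Metric.sphere (0 : EuclideanSpace ℝ (Fin (n + 1))) 1)ᶜ = 0)
    (hσinv : ∀ T : EuclideanSpace ℝ (Fin (n + 1)) ≃ₗᵢ[ℝ] EuclideanSpace ℝ (Fin (n + 1)),
      σ.map T = σ) :
    ∃ ν : Measure (EuclideanSpace ℝ (Fin (n + 1))),
      IsProbabilityMeasure ν ∧
      ν (Metric.sphere (0 : EuclideanSpace ℝ (Fin (n + 1))) 1)ᶜ = 0 ∧
      transportCost sphereCost ν σ = ⊤ ∧
      relEnt ν σ < ⊤ := by
  obtain ⟨ν, hprob, hSc, htrans, hac, hint⟩ := main_aux σ hσsphere hσinv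
  refine ⟨ν, hprob, hSc, ?_, ?_⟩
  · exact top_le_iff.mp (le_iInf₂ fun π hπ => (htrans π hπ.1 hπ.2).ge)
  · simp only [relEnt]
    rw [if_pos ⟨hac, hint⟩]
    exact ENNReal.ofReal_lt_top
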